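/- Let F be a matching in G covering all vertices except a, K = E(G) \ F. A vertex x covered by F is oddly K-reachable from a if and only if its F-partner F(x) is evenly K-reachable from a. -/

import Mathlib

variable {V : Type*}

/-- A matching: a set of non-loop edges that are pairwise vertex-disjoint. -/
def IsMatching (M : Set (Sym2 V)) : Prop :=
  (∀ e ∈ M, ¬ e.IsDiag) ∧ ∀ e ∈ M, ∀ f ∈ M, e ≠ f → ∀ v, v ∈ e → v ∉ f

/-- A vertex is covered by an edge set if it belongs to some edge. -/
def covered (M : Set (Sym2 V)) (v : V) : Prop := ∃ e ∈ M, v ∈ e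

/-- A `K`–`F`-alternating path: a (simple) nonempty list of vertices whose
odd-numbered edges (0-indexed: even positions) lie in `K` and even-numbered edges lie in `F`. -/
def AltPath (K F : Set (Sym2 V)) (p : List V) : Prop :=
  p ≠ [] ∧ p.Nodup ∧ ∀ i, ∀ h : i + 1 < p.length,
    s(p[i]'(Nat.lt_of_succ_lt h), p[i+1]'h) ∈ (if i % 2 = 0 then K else F)

/-- `x` is evenly `K`-reachable from `a`: there is a `K`–`F`-alternating path from `a` to `x`
with an even number of edges (an odd number of vertices); `x = a` via the empty path. -/
def evenReach (K F : Set (Sym2 V)) (a x : V) : Prop :=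
  ∃ (p : List V) (hp : p ≠ []), AltPath K F p ∧ p.head hp = a ∧ p.getLast hp = x ∧
    Odd p.length

/-- `x` is oddly `K`-reachable from `a`: there is a `K`–`F`-alternating path from `a` to `x`
with an odd number of edges (an even, positive, number of vertices). -/
def oddReach (K F : Set (Sym2 V)) (a x : V) : Prop :=
  ∃ (p : List V) (hp : p ≠ []), AltPath K F p ∧ p.head hp = a ∧ p.getLast hp = x ∧
    Even p.length

/-- `F` a matching covering all vertices except `a`, `K = E \ F`.  A vertex `x`
matched by `F` to `y` is oddly `K`-reachable from `a` iff `y = F(x)` is evenly `K`-reachable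
from `a`. -/
theorem stmt_9 {V : Type*} (E F : Set (Sym2 V)) (a : V)
    (hE : ∀ e ∈ E, ¬ e.IsDiag) (hFE : F ⊆ E) (hF : IsMatching F)
    (hna : ¬ covered F a) (hcov : ∀ v, v ≠ a → covered F v)
    (x y : V) (hxy : s(x, y) ∈ F) :
    oddReach (E \ F) F a x ↔ evenReach (E \ F) F a y := by
  have hxney : x ≠ y := fun h => hE _ (hFE hxy) (by simp [h])
  constructor
  · rintro ⟨p, hp, ⟨-, hnd, halt⟩, hhead, hlast, heven⟩
    have hlen : 0 < p.length := List.length_pos_iff.mpr hp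
    have hlen2 : 2 ≤ p.length := by
      rcases heven with ⟨k, hk⟩; omega
    have hlastx : p[p.length - 1]'(by omega) = x := by
      rw [← List.getLast_eq_getElem hp]; exact hlast
    have hheada : p[0]'hlen = a := by
      rw [← List.head_eq_getElem hp]; exact hhead
    -- y ∉ p
    have hy : y ∉ p := by
      intro hyp
      obtain ⟨j, hj, hjy⟩ := List.getElem_of_mem hyp
      have hjne : j ≠ p.length - 1 := by
        intro h; subst h; exact hxney (hlastx.symm.trans hjy)
      have hj0 : j ≠ 0 := by
        intro h; subst h
        exact hna ⟨s(x, y), hxy, by simp [← hjy, hheada]⟩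
      -- the F-edge of p incident to position j
      have key : ∀ k, k % 2 = 1 → ∀ hk : k + 1 < p.length,
          (p[k]'(Nat.lt_of_succ_lt hk) = y ∨ p[k+1]'hk = y) → False := by
        intro k hk1 hk hmem
        have he : s(p[k]'(Nat.lt_of_succ_lt hk), p[k+1]'hk) ∈ F := by
          have := halt k hk
          simpa [hk1] using this
        have heq : s(p[k]'(Nat.lt_of_succ_lt hk), p[k+1]'hk) = s(x, y) := by
          by_contra hne
          exact hF.2 _ he _ hxy hne y (by rcases hmem with h | h <;> simp [← h]) (by simp)
        rw [Sym2.eq_iff] at heq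
        have hx' : p[k]'(Nat.lt_of_succ_lt hk) = x ∨ p[k+1]'hk = x := by
          rcases heq with ⟨h1, h2⟩ | ⟨h1, h2⟩
          · left; exact h1
          · right; exact h2
        rcases hx' with h | h
        · have : k = p.length - 1 :=
            (List.Nodup.getElem_inj_iff hnd (hi := Nat.lt_of_succ_lt hk)
              (hj := by omega)).mp (h.trans hlastx.symm)
          omega
        · have : k + 1 = p.length - 1 :=
            (List.Nodup.getElem_inj_iff hnd (hi := hk)
              (hj := by omega)).mp (h.trans hlastx.symm)
          rcases heven with ⟨m, hm⟩
          omega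
      rcases Nat.even_or_odd j with hje | hjo
      · -- j even, j ≥ 2 (j ≠ 0), use edge j-1 (odd index)
        obtain ⟨m, hm⟩ := hje
        have hj2 : 2 ≤ j := by omega
        exact key (j - 1) (by omega) (by omega) (Or.inr (by
          have : j - 1 + 1 = j := by omega
          simp_rw [this]; exact hjy))
      · -- j odd; need j + 1 < p.length, i.e. j ≠ len - 1
        have : j + 1 < p.length := by
          rcases heven with ⟨m, hm⟩
          rcases hjo with ⟨m', hm'⟩
          omega
        exact key j (Nat.odd_iff.mp hjo) this (Or.inl hjy)
    -- build p ++ [y]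
    refine ⟨p ++ [y], by simp, ⟨by simp, ?_, ?_⟩, ?_, ?_, ?_⟩
    · simp [List.nodup_append, hnd, hy]
      exact fun b hb h => hy (h ▸ hb)
    · intro i h
      simp only [List.length_append, List.length_singleton] at h
      by_cases hi : i + 1 < p.length
      · have h1 : (p ++ [y])[i]'(by simp; omega) = p[i]'(Nat.lt_of_succ_lt hi) :=
          List.getElem_append_left _
        have h2 : (p ++ [y])[i+1]'(by simp; omega) = p[i+1]'hi :=
          List.getElem_append_left _
        rw [h1, h2]
        exact halt i hi
      · have hieq : i = p.length - 1 := by omega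
        have h1 : (p ++ [y])[i]'(by simp; omega) = p[i]'(by omega) :=
          List.getElem_append_left _
        have h2 : (p ++ [y])[i+1]'(by simp; omega) = y := by
          have : i + 1 = p.length := by omega
          simp [List.getElem_append_right, this]
        have hpx : p[i]'(by omega) = x := by subst hieq; exact hlastx
        rw [h1, h2, hpx]
        have hmod : i % 2 = 1 := by
          rcases heven with ⟨m, hm⟩; omega
        rw [if_neg (by omega)]
        exact hxy
    · rw [List.head_eq_getElem]
      have : (p ++ [y])[0]'(by simp only [List.length_append, List.length_singleton]; omega) =
          p[0]'hlen := List.getElem_append_left _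
      rw [this, hheada]
    · simp
    · simp only [List.length_append, List.length_singleton]
      exact heven.add_one
  · rintro ⟨p, hp, ⟨-, hnd, halt⟩, hhead, hlast, hodd⟩
    have hlen : 0 < p.length := List.length_pos_iff.mpr hp
    have hlasty : p[p.length - 1]'(by omega) = y := by
      rw [← List.getLast_eq_getElem hp]; exact hlast
    have hheada : p[0]'hlen = a := by
      rw [← List.head_eq_getElem hp]; exact hhead
    have hya : y ≠ a := by
      intro h
      exact hna ⟨s(x, y), hxy, by simp [h]⟩
    have hlen3 : 3 ≤ p.length := by
      rcases hodd with ⟨m, hm⟩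
      rcases Nat.lt_or_ge p.length 3 with h | h
      · exfalso
        have h1 : p.length = 1 := by omega
        exact hya (by rw [← hlasty, ← hheada]; congr 1; omega)
      · exact h
    -- last edge is an F-edge containing y, so p[len-2] = x
    have hlast2 : p[p.length - 2]'(by omega) = x := by
      set k := p.length - 2 with hk
      have hklt : k + 1 < p.length := by omega
      have hkodd : k % 2 = 1 := by
        rcases hodd with ⟨m, hm⟩; omega
      have he : s(p[k]'(by omega), p[k+1]'hklt) ∈ F := by
        have := halt k hklt
        simpa [hkodd] using this
      have hk1 : p[k+1]'hklt = y := by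
        have : k + 1 = p.length - 1 := by omega
        simp_rw [this]; exact hlasty
      have heq : s(p[k]'(by omega), p[k+1]'hklt) = s(x, y) := by
        by_contra hne
        exact hF.2 _ he _ hxy hne y (by simp [← hk1]) (by simp)
      rw [hk1, Sym2.eq_iff] at heq
      rcases heq with ⟨h1, -⟩ | ⟨-, h2⟩
      · exact h1
      · exact absurd h2.symm hxney
    -- take p.dropLast
    have hdl : p.dropLast.length = p.length - 1 := List.length_dropLast
    have hdlne : p.dropLast ≠ [] := by
      intro h
      have := congrArg List.length h
      simp [hdl] at this
      omega
    refine ⟨p.dropLast, hdlne, ⟨hdlne, hnd.sublist (List.dropLast_sublist p), ?_⟩, ?_, ?_, ?_⟩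
    · intro i h
      rw [hdl] at h
      have h1 : p.dropLast[i]'(by omega) = p[i]'(by omega) := List.getElem_dropLast ..
      have h2 : p.dropLast[i+1]'(by rw [hdl]; omega) = p[i+1]'(by omega) :=
        List.getElem_dropLast ..
      rw [h1, h2]
      exact halt i (by omega)
    · rw [List.head_eq_getElem]
      have : p.dropLast[0]'(by omega) = p[0]'(by omega) := List.getElem_dropLast ..
      rw [this, hheada]
    · rw [List.getLast_eq_getElem]
      have : p.dropLast[p.dropLast.length - 1]'(by omega) =
          p[p.dropLast.length - 1]'(by omega) := List.getElem_dropLast ..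
      rw [this]
      have : p.dropLast.length - 1 = p.length - 2 := by omega
      simp_rw [this]
      exact hlast2
    · rw [hdl]
      rcases hodd with ⟨m, hm⟩
      exact ⟨m, by omega⟩
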